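/- Let Ā be any n×n real symmetric matrix, let w₁,…,w_n > 0 with W = diag(w) and w_min = min_i w_i, and suppose max_i |d_i/w_i − 1| ≤ η and ‖A − Ā‖₂ ≤ t for some η, t ≥ 0. Then ‖D^{-1/2} A D^{-1/2} − W^{-1/2} Ā W^{-1/2}‖₂ ≤ 2η + η² + t/w_min. -/
import Mathlib

open Matrix Finset

/-- Spectral norm of a matrix: the operator norm induced by the Euclidean vector norm. -/
noncomputable def sNorm {n : ℕ} (M : Matrix (Fin n) (Fin n) ℝ) : ℝ :=
  ‖Matrix.toEuclideanCLM (𝕜 := ℝ) M‖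

lemma sNorm_nonneg {n : ℕ} (M : Matrix (Fin n) (Fin n) ℝ) : 0 ≤ sNorm M :=
  norm_nonneg _

lemma sNorm_mul_le {n : ℕ} (M N : Matrix (Fin n) (Fin n) ℝ) :
    sNorm (M * N) ≤ sNorm M * sNorm N := by
  unfold sNorm
  rw [_root_.map_mul]
  exact norm_mul_le _ _

lemma sNorm_add_le {n : ℕ} (M N : Matrix (Fin n) (Fin n) ℝ) :
    sNorm (M + N) ≤ sNorm M + sNorm N := by
  unfold sNorm
  rw [_root_.map_add]
  exact norm_add_le _ _

lemma sNorm_neg {n : ℕ} (M : Matrix (Fin n) (Fin n) ℝ) : sNorm (-M) = sNorm M := by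
  unfold sNorm
  rw [_root_.map_neg, norm_neg]

lemma sNorm_le_of_sq {n : ℕ} (M : Matrix (Fin n) (Fin n) ℝ) (c : ℝ) (hc : 0 ≤ c)
    (h : ∀ x : Fin n → ℝ, ∑ i, (M *ᵥ x) i ^ 2 ≤ c ^ 2 * ∑ i, x i ^ 2) :
    sNorm M ≤ c := by
  refine ContinuousLinearMap.opNorm_le_bound _ hc fun x => ?_
  have hx : ∀ y : EuclideanSpace ℝ (Fin n), ‖y‖ = Real.sqrt (∑ i, y i ^ 2) := by
    intro y
    rw [EuclideanSpace.norm_eq]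
    congr 1
    refine Finset.sum_congr rfl fun i _ => ?_
    rw [Real.norm_eq_abs, sq_abs]
  rw [hx, hx]
  have key : ∀ i, (toEuclideanCLM (𝕜 := ℝ) M x) i = (M *ᵥ (fun j => x j)) i := by
    intro i
    have := Matrix.ofLp_toEuclideanCLM (𝕜 := ℝ) M x
    exact congrFun this i
  calc Real.sqrt (∑ i, (toEuclideanCLM (𝕜 := ℝ) M x) i ^ 2)
      = Real.sqrt (∑ i, (M *ᵥ (fun j => x j)) i ^ 2) := by
        simp only [key]
    _ ≤ Real.sqrt (c ^ 2 * ∑ i, x i ^ 2) := Real.sqrt_le_sqrt (h _)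
    _ = c * Real.sqrt (∑ i, x i ^ 2) := by
        rw [Real.sqrt_mul (sq_nonneg c), Real.sqrt_sq hc]

lemma sNorm_diagonal_le {n : ℕ} (v : Fin n → ℝ) (c : ℝ) (hc : 0 ≤ c)
    (h : ∀ i, |v i| ≤ c) : sNorm (Matrix.diagonal v) ≤ c := by
  refine sNorm_le_of_sq _ c hc fun x => ?_
  rw [Finset.mul_sum]
  refine Finset.sum_le_sum fun i _ => ?_
  rw [Matrix.mulVec_diagonal, mul_pow]
  have h1 : v i ^ 2 ≤ c ^ 2 := sq_le_sq' (neg_le_of_abs_le (h i)) (le_of_abs_le (h i))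
  exact mul_le_mul_of_nonneg_right h1 (sq_nonneg _)

/-- The symmetrically-normalized adjacency matrix has spectral norm at most 1. -/
lemma sNorm_normalized_le_one {n : ℕ}
    (A : Matrix (Fin n) (Fin n) ℝ) (hAsymm : A.IsSymm) (hA0 : ∀ i j, 0 ≤ A i j)
    (d : Fin n → ℝ) (hd : ∀ i, d i = ∑ j, A i j) (hdpos : ∀ i, 0 < d i) :
    sNorm (Matrix.diagonal (fun i => (Real.sqrt (d i))⁻¹) * A *
        Matrix.diagonal (fun i => (Real.sqrt (d i))⁻¹)) ≤ 1 := by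
  refine sNorm_le_of_sq _ 1 zero_le_one fun x => ?_
  have hsq : ∀ i, ((Real.sqrt (d i))⁻¹) ^ 2 = (d i)⁻¹ := by
    intro i
    rw [inv_pow, Real.sq_sqrt (hdpos i).le]
  have hentry : ∀ i, ((Matrix.diagonal (fun i => (Real.sqrt (d i))⁻¹) * A *
      Matrix.diagonal (fun i => (Real.sqrt (d i))⁻¹)) *ᵥ x) i
      = (Real.sqrt (d i))⁻¹ * ∑ j, A i j * ((Real.sqrt (d j))⁻¹ * x j) := by
    intro i
    simp only [Matrix.mulVec, dotProduct, Matrix.mul_diagonal, Matrix.diagonal_mul,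
      Finset.mul_sum]
    exact Finset.sum_congr rfl fun j _ => by ring
  calc ∑ i, ((Matrix.diagonal (fun i => (Real.sqrt (d i))⁻¹) * A *
      Matrix.diagonal (fun i => (Real.sqrt (d i))⁻¹)) *ᵥ x) i ^ 2
      = ∑ i, (d i)⁻¹ * (∑ j, A i j * ((Real.sqrt (d j))⁻¹ * x j)) ^ 2 := by
        refine Finset.sum_congr rfl fun i _ => ?_
        rw [hentry i, mul_pow, hsq i]
    _ ≤ ∑ i, (d i)⁻¹ * (d i * ∑ j, A i j * (x j ^ 2 * (d j)⁻¹)) := by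
        refine Finset.sum_le_sum fun i _ => ?_
        refine mul_le_mul_of_nonneg_left ?_ (inv_nonneg.2 (hdpos i).le)
        have cs := Finset.sum_sq_le_sum_mul_sum_of_sq_eq_mul Finset.univ
          (r := fun j => A i j * ((Real.sqrt (d j))⁻¹ * x j))
          (f := fun j => A i j) (g := fun j => A i j * (x j ^ 2 * (d j)⁻¹))
          (fun j _ => hA0 i j)
          (fun j _ => mul_nonneg (hA0 i j) (mul_nonneg (sq_nonneg _) (inv_nonneg.2 (hdpos j).le)))
          (fun j _ => by
            rw [mul_pow, mul_pow, inv_pow, Real.sq_sqrt (hdpos j).le]; ring)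
        calc (∑ j, A i j * ((Real.sqrt (d j))⁻¹ * x j)) ^ 2
            ≤ (∑ j, A i j) * ∑ j, A i j * (x j ^ 2 * (d j)⁻¹) := cs
          _ = d i * ∑ j, A i j * (x j ^ 2 * (d j)⁻¹) := by rw [← hd i]
    _ = ∑ i, ∑ j, A i j * (x j ^ 2 * (d j)⁻¹) := by
        refine Finset.sum_congr rfl fun i _ => ?_
        rw [← mul_assoc, inv_mul_cancel₀ (hdpos i).ne', one_mul]
    _ = ∑ j, (x j ^ 2 * (d j)⁻¹) * ∑ i, A i j := by
        rw [Finset.sum_comm]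
        refine Finset.sum_congr rfl fun j _ => ?_
        rw [Finset.mul_sum]
        exact Finset.sum_congr rfl fun i _ => by ring
    _ = 1 ^ 2 * ∑ j, x j ^ 2 := by
        rw [one_pow, one_mul]
        refine Finset.sum_congr rfl fun j _ => ?_
        have hcol : ∑ i, A i j = d j := by
          rw [hd j]
          exact Finset.sum_congr rfl fun i _ => (hAsymm.apply i j).symm
        rw [hcol, mul_assoc, inv_mul_cancel₀ (hdpos j).ne', mul_one]

/-- if `max_i |d_i/w_i − 1| ≤ η` and `‖A − Ā‖₂ ≤ t`, then
`‖D^{-1/2} A D^{-1/2} − W^{-1/2} Ā W^{-1/2}‖₂ ≤ 2η + η² + t/w_min`. -/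
theorem normalized_adjacency_perturbation_bound
    (n : ℕ) [NeZero n]
    (A : Matrix (Fin n) (Fin n) ℝ) (hAsymm : A.IsSymm) (hA0 : ∀ i j, 0 ≤ A i j)
    (d : Fin n → ℝ) (hd : ∀ i, d i = ∑ j, A i j) (hdpos : ∀ i, 0 < d i)
    (Abar : Matrix (Fin n) (Fin n) ℝ) (hAbarSymm : Abar.IsSymm)
    (w : Fin n → ℝ) (hw : ∀ i, 0 < w i)
    (η t : ℝ) (hη : 0 ≤ η) (ht : 0 ≤ t)
    (hdw : ∀ i, |d i / w i - 1| ≤ η)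
    (hAt : sNorm (A - Abar) ≤ t) :
    sNorm (Matrix.diagonal (fun i => (Real.sqrt (d i))⁻¹) * A *
        Matrix.diagonal (fun i => (Real.sqrt (d i))⁻¹) -
      Matrix.diagonal (fun i => (Real.sqrt (w i))⁻¹) * Abar *
        Matrix.diagonal (fun i => (Real.sqrt (w i))⁻¹)) ≤
      2 * η + η ^ 2 + t / univ.inf' univ_nonempty w := by
  set wmin : ℝ := univ.inf' univ_nonempty w with hwmin
  have hwminpos : 0 < wmin := by
    rw [hwmin, Finset.lt_inf'_iff]
    exact fun i _ => hw i
  have hwmin_le : ∀ i, wmin ≤ w i := fun i => Finset.inf'_le _ (Finset.mem_univ i)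
  set Dh := Matrix.diagonal (fun i => (Real.sqrt (d i))⁻¹) with hDh
  set Wh := Matrix.diagonal (fun i => (Real.sqrt (w i))⁻¹) with hWh
  set G := Matrix.diagonal (fun i => Real.sqrt (d i) * (Real.sqrt (w i))⁻¹) with hG
  set N := Dh * A * Dh with hN
  set F := G - 1 with hF
  -- Wh = G * Dh = Dh * G
  have hWh1 : Wh = G * Dh := by
    rw [hWh, hG, hDh, Matrix.diagonal_mul_diagonal]
    refine congrArg Matrix.diagonal (funext fun i => ?_)
    have h1 : Real.sqrt (d i) ≠ 0 := Real.sqrt_ne_zero'.2 (hdpos i)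
    have h2 : Real.sqrt (w i) ≠ 0 := Real.sqrt_ne_zero'.2 (hw i)
    field_simp
  have hWh2 : Wh = Dh * G := by
    rw [hWh, hG, hDh, Matrix.diagonal_mul_diagonal]
    refine congrArg Matrix.diagonal (funext fun i => ?_)
    have h1 : Real.sqrt (d i) ≠ 0 := Real.sqrt_ne_zero'.2 (hdpos i)
    have h2 : Real.sqrt (w i) ≠ 0 := Real.sqrt_ne_zero'.2 (hw i)
    field_simp
  -- key identity
  have hid : Dh * A * Dh - Wh * Abar * Wh =
      (-(F * N * F) - F * N - N * F) + Wh * (A - Abar) * Wh := by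
    have : Wh * Abar * Wh = Wh * A * Wh - Wh * (A - Abar) * Wh := by noncomm_ring
    rw [this]
    have hWAW : Wh * A * Wh = G * N * G := by
      nth_rewrite 1 [hWh1]
      nth_rewrite 1 [hWh2]
      rw [hN]; noncomm_ring
    rw [hWAW, hN, hF]
    noncomm_ring
  rw [hid]
  -- bounds
  have hNle : sNorm N ≤ 1 := sNorm_normalized_le_one A hAsymm hA0 d hd hdpos
  have hFle : sNorm F ≤ η := by
    rw [hF, hG, ← Matrix.diagonal_one, Matrix.diagonal_sub]
    refine sNorm_diagonal_le _ η hη fun i => ?_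
    have hs : Real.sqrt (d i) * (Real.sqrt (w i))⁻¹ = Real.sqrt (d i / w i) := by
      rw [Real.sqrt_div (hdpos i).le, div_eq_mul_inv]
    rw [hs]
    have hx0 : 0 ≤ d i / w i := div_nonneg (hdpos i).le (hw i).le
    have hsq : Real.sqrt (d i / w i) ^ 2 = d i / w i := Real.sq_sqrt hx0
    have hs0 : 0 ≤ Real.sqrt (d i / w i) := Real.sqrt_nonneg _
    have habs := abs_le.mp (hdw i)
    rw [abs_le]
    constructor <;> nlinarith [sq_nonneg (Real.sqrt (d i / w i) - 1)]
  have hWhle : sNorm Wh ≤ (Real.sqrt wmin)⁻¹ := by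
    rw [hWh]
    refine sNorm_diagonal_le _ _ (inv_nonneg.2 (Real.sqrt_nonneg _)) fun i => ?_
    rw [abs_of_nonneg (inv_nonneg.2 (Real.sqrt_nonneg _))]
    have h0 : 0 < Real.sqrt wmin := Real.sqrt_pos.2 hwminpos
    have h1 : Real.sqrt wmin ≤ Real.sqrt (w i) := Real.sqrt_le_sqrt (hwmin_le i)
    gcongr
  have hPert : sNorm (Wh * (A - Abar) * Wh) ≤ t / wmin := by
    have hw0 : (0:ℝ) ≤ (Real.sqrt wmin)⁻¹ := inv_nonneg.2 (Real.sqrt_nonneg _)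
    calc sNorm (Wh * (A - Abar) * Wh) ≤ sNorm (Wh * (A - Abar)) * sNorm Wh :=
          sNorm_mul_le _ _
      _ ≤ (sNorm Wh * sNorm (A - Abar)) * sNorm Wh :=
          mul_le_mul_of_nonneg_right (sNorm_mul_le _ _) (sNorm_nonneg _)
      _ ≤ ((Real.sqrt wmin)⁻¹ * t) * (Real.sqrt wmin)⁻¹ :=
          mul_le_mul (mul_le_mul hWhle hAt (sNorm_nonneg _) hw0) hWhle
            (sNorm_nonneg _) (by positivity)
      _ = t / wmin := by
          have hss : (Real.sqrt wmin)⁻¹ * (Real.sqrt wmin)⁻¹ = wmin⁻¹ := by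
            rw [← mul_inv, Real.mul_self_sqrt hwminpos.le]
          rw [div_eq_mul_inv, ← hss]
          ring
  have hFN : sNorm (F * N) ≤ η := by
    refine le_trans (sNorm_mul_le _ _) ?_
    calc sNorm F * sNorm N ≤ η * 1 := mul_le_mul hFle hNle (sNorm_nonneg _) hη
      _ = η := mul_one η
  have hNF : sNorm (N * F) ≤ η := by
    refine le_trans (sNorm_mul_le _ _) ?_
    calc sNorm N * sNorm F ≤ 1 * η := mul_le_mul hNle hFle (sNorm_nonneg _) zero_le_one
      _ = η := one_mul η
  have hFNF : sNorm (F * N * F) ≤ η * η :=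
    le_trans (sNorm_mul_le _ _) (mul_le_mul hFN hFle (sNorm_nonneg _) hη)
  have hsplit : -(F * N * F) - F * N - N * F + Wh * (A - Abar) * Wh =
      (-(F * N * F) + -(F * N)) + (-(N * F) + Wh * (A - Abar) * Wh) := by abel
  rw [hsplit]
  have hbound : sNorm ((-(F * N * F) + -(F * N)) + (-(N * F) + Wh * (A - Abar) * Wh)) ≤
      (η * η + η) + (η + t / wmin) := by
    refine le_trans (sNorm_add_le _ _) (add_le_add ?_ ?_)
    · refine le_trans (sNorm_add_le _ _) (add_le_add ?_ ?_)
      · rw [sNorm_neg]; exact hFNF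
      · rw [sNorm_neg]; exact hFN
    · refine le_trans (sNorm_add_le _ _) (add_le_add ?_ ?_)
      · rw [sNorm_neg]; exact hNF
      · exact hPert
  refine le_trans hbound (le_of_eq ?_)
  ring
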